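/- arXiv:2409.18508 — 5 statements merged into one kernel-verified Lean document; each statement's English description precedes it below -/
import Mathlib

section
/- Let μ ≥ 0 and M = A + w uᵀ with A ∈ M_{n,p}(ℝ), w ∈ ℝⁿ with ‖w‖ = 1, u ∈ ℝᵖ. Set B = (I − wwᵀ)A, D_μ = BᵀB + μI, r = u + Aᵀw, and assume D_μ and MᵀM + μI are invertible. Then M(MᵀM + μI)⁻¹Mᵀ = C − bbᵀ/(1+d), where C = B D_μ⁻¹ Bᵀ + wwᵀ, b = B D_μ⁻¹ r − w, and d = rᵀ D_μ⁻¹ r. -/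
open Matrix

set_option linter.unusedSectionVars false

section Helpers

variable {n p q : Type*} [Fintype n] [Fintype p] [Fintype q]

lemma mul_vecMulVec' (A : Matrix n p ℝ) (x : p → ℝ) (y : q → ℝ) :
    A * vecMulVec x y = vecMulVec (A *ᵥ x) y := by
  ext i j
  simp [vecMulVec_apply, mul_apply, mulVec, dotProduct, Finset.sum_mul, mul_assoc]

lemma vecMulVec_mul' (x : n → ℝ) (y : p → ℝ) (A : Matrix p q ℝ) :
    vecMulVec x y * A = vecMulVec x (Aᵀ *ᵥ y) := by
  ext i j
  simp only [vecMulVec_apply, mul_apply, mulVec, dotProduct, transpose_apply, Finset.mul_sum]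
  apply Finset.sum_congr rfl
  intro k _
  ring

lemma vecMulVec_mul_vecMulVec' (x : n → ℝ) (y z : p → ℝ) (t : q → ℝ) :
    vecMulVec x y * vecMulVec z t = (y ⬝ᵥ z) • vecMulVec x t := by
  ext i j
  simp only [vecMulVec_apply, mul_apply, Matrix.smul_apply, smul_eq_mul, dotProduct, Finset.sum_mul]
  apply Finset.sum_congr rfl
  intro k _
  ring

lemma vecMulVec_transpose' (x : n → ℝ) (y : p → ℝ) :
    (vecMulVec x y)ᵀ = vecMulVec y x := by
  ext i j; simp [vecMulVec_apply, mul_comm]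

lemma vecMulVec_mulVec' (x : n → ℝ) (y : p → ℝ) (z : p → ℝ) :
    vecMulVec x y *ᵥ z = (y ⬝ᵥ z) • x := by
  ext i
  simp only [mulVec, dotProduct, vecMulVec_apply, Pi.smul_apply, smul_eq_mul, Finset.sum_mul]
  apply Finset.sum_congr rfl
  intro k _
  ring

lemma vecMulVec_add_right' (x : n → ℝ) (y z : p → ℝ) :
    vecMulVec x (y + z) = vecMulVec x y + vecMulVec x z := by
  ext i j; simp [vecMulVec_apply, mul_add]

lemma vecMulVec_zero_left' (y : p → ℝ) : vecMulVec (0 : n → ℝ) y = 0 := by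
  ext i j; simp [vecMulVec_apply]

lemma vecMulVec_zero_right' (x : n → ℝ) : vecMulVec x (0 : p → ℝ) = 0 := by
  ext i j; simp [vecMulVec_apply]

end Helpers

/-- Rank-one perturbation formula for the regularized projection matrix
`M (MᵀM + μI)⁻¹ Mᵀ` where `M = A + w uᵀ` and `‖w‖ = 1`. -/
theorem rank_one_score_formula {n p : Type*} [Fintype n] [Fintype p]
    [DecidableEq n] [DecidableEq p]
    (μ : ℝ) (hμ : 0 ≤ μ)
    (A : Matrix n p ℝ) (w : n → ℝ) (u : p → ℝ)
    (hw : w ⬝ᵥ w = 1)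
    (M : Matrix n p ℝ) (hM : M = A + Matrix.vecMulVec w u)
    (B : Matrix n p ℝ) (hB : B = (1 - Matrix.vecMulVec w w) * A)
    (D : Matrix p p ℝ) (hD : D = Bᵀ * B + μ • 1)
    (r : p → ℝ) (hr : r = u + Aᵀ *ᵥ w)
    (hDinv : IsUnit D.det)
    (hMinv : IsUnit (Mᵀ * M + μ • (1 : Matrix p p ℝ)).det) :
    M * (Mᵀ * M + μ • (1 : Matrix p p ℝ))⁻¹ * Mᵀ =
      (B * D⁻¹ * Bᵀ + Matrix.vecMulVec w w)
        - (1 + r ⬝ᵥ (D⁻¹ *ᵥ r))⁻¹ •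
            Matrix.vecMulVec (B *ᵥ (D⁻¹ *ᵥ r) - w) (B *ᵥ (D⁻¹ *ᵥ r) - w) := by
  have hDsymm : Dᵀ = D := by
    rw [hD]; simp [transpose_add, transpose_mul, transpose_smul]
  have hEsymm : (D⁻¹)ᵀ = D⁻¹ := by
    rw [transpose_nonsing_inv, hDsymm]
  set E := D⁻¹ with hE
  set g' : p → ℝ := E *ᵥ r with hg'
  set d : ℝ := r ⬝ᵥ g' with hd
  set g : n → ℝ := B *ᵥ g' with hg
  have hDE : D * E = 1 := mul_nonsing_inv D hDinv
  have hBw : Bᵀ *ᵥ w = 0 := by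
    have h1 : (1 - vecMulVec w w) *ᵥ w = 0 := by
      rw [sub_mulVec, one_mulVec, vecMulVec_mulVec', hw, one_smul, sub_self]
    rw [hB, transpose_mul, transpose_sub, transpose_one, vecMulVec_transpose',
      ← mulVec_mulVec, h1, mulVec_zero]
  have hM' : M = B + vecMulVec w r := by
    rw [hM, hB, hr, Matrix.sub_mul, Matrix.one_mul, vecMulVec_mul',
      vecMulVec_add_right']
    abel
  have hMT : Mᵀ = Bᵀ + vecMulVec r w := by
    rw [hM', transpose_add, vecMulVec_transpose']
  have hS : Mᵀ * M + μ • (1 : Matrix p p ℝ) = D + vecMulVec r r := by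
    rw [hMT, hM', Matrix.add_mul, Matrix.mul_add, Matrix.mul_add, mul_vecMulVec',
      hBw, vecMulVec_zero_left', vecMulVec_mul' r w B, hBw, vecMulVec_zero_right',
      vecMulVec_mul_vecMulVec', hw, one_smul, hD]
    abel
  have hDg' : D *ᵥ g' = r := by
    rw [hg', mulVec_mulVec, hDE, one_mulVec]
  have hc : (1 : ℝ) + d ≠ 0 := by
    intro h0
    have hSdet : IsUnit (D + vecMulVec r r).det := by rw [← hS]; exact hMinv
    have hx : (D + vecMulVec r r) *ᵥ g' = 0 := by
      rw [add_mulVec, hDg', vecMulVec_mulVec', ← hd, ← one_smul ℝ r, smul_smul,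
        mul_one, ← add_smul, h0, zero_smul]
    have hg0 : g' = 0 := by
      have h2 := congrArg (fun v => (D + vecMulVec r r)⁻¹ *ᵥ v) hx
      simpa [mulVec_mulVec, nonsing_inv_mul _ hSdet] using h2
    have hd0 : d = 0 := by rw [hd, hg0, dotProduct_zero]
    rw [hd0] at h0
    norm_num at h0
  have hSinv : (Mᵀ * M + μ • (1 : Matrix p p ℝ))⁻¹ =
      E - (1 + d)⁻¹ • vecMulVec g' g' := by
    rw [hS]
    apply inv_eq_right_inv
    rw [Matrix.mul_sub, Matrix.mul_smul, Matrix.add_mul, hDE,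
      vecMulVec_mul' r r E, hEsymm, ← hg',
      Matrix.add_mul D (vecMulVec r r) (vecMulVec g' g'),
      mul_vecMulVec' D, hDg', vecMulVec_mul_vecMulVec', ← hd]
    have hkey : (1 + d)⁻¹ • (vecMulVec r g' + d • vecMulVec r g')
        = vecMulVec r g' := by
      rw [smul_add, smul_smul, ← add_smul, show (1 + d)⁻¹ + (1 + d)⁻¹ * d = 1 by
        field_simp, one_smul]
    rw [hkey]
    abel
  have hMg' : M *ᵥ g' = g + d • w := by
    rw [hM', add_mulVec, vecMulVec_mulVec', ← hd, ← hg]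
  have h2 : M * vecMulVec g' g' * Mᵀ = vecMulVec (g + d • w) (g + d • w) := by
    rw [mul_vecMulVec', vecMulVec_mul', transpose_transpose, hMg']
  have h1 : M * E * Mᵀ = B * E * Bᵀ + vecMulVec g w + vecMulVec w g
      + d • vecMulVec w w := by
    rw [hMT, hM', Matrix.add_mul, vecMulVec_mul' w r E, hEsymm, ← hg',
      Matrix.add_mul, Matrix.mul_add, Matrix.mul_add,
      mul_vecMulVec' (B * E), ← mulVec_mulVec, ← hg,
      vecMulVec_mul' w g' Bᵀ, transpose_transpose, ← hg,
      vecMulVec_mul_vecMulVec', dotProduct_comm, ← hd]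
    abel
  rw [hSinv, Matrix.mul_sub, Matrix.sub_mul, Matrix.mul_smul, Matrix.smul_mul,
    h1, h2]
  ext i j
  simp only [Matrix.sub_apply, Matrix.add_apply, Matrix.smul_apply, vecMulVec_apply, smul_eq_mul,
    Pi.add_apply, Pi.smul_apply, Pi.sub_apply]
  field_simp
  ring
end

section
/- With the notation of the rank-one perturbation lemma: if additionally A ∈ M_{n+1,p}(ℝ) has the form A = π⊥_𝟙 V for some V ∈ M_{n+1,p}(ℝ) (where π⊥_𝟙 = I − (n+1)⁻¹ 𝟙𝟙ᵀ) and w = v/‖v‖ with v = e_{n+1} − (n+1)⁻¹𝟙, then B := (I − wwᵀ)A satisfies B_{ij} = V_{ij} − n⁻¹ ∑_{l=1}^n V_{lj} for i ≤ n, and the last row of B is zero: e_{n+1}ᵀ B = 0. -/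
open Matrix

/-- If `A = π⊥_𝟙 V` and `w = v/‖v‖` with `v = e_{n+1} − (n+1)⁻¹𝟙`, then
`B = (I − wwᵀ)A` has entries `B_{ij} = V_{ij} − n⁻¹ ∑_{l=1}^n V_{lj}` for `i ≤ n`,
and its last row is zero. -/
theorem centered_matrix_rows (n p : ℕ) (hn : 0 < n)
    (V : Matrix (Fin (n + 1)) (Fin p) ℝ)
    (v : Fin (n + 1) → ℝ)
    (hv : v = fun i => (if i = Fin.last n then (1 : ℝ) else 0) - ((n : ℝ) + 1)⁻¹)
    (w : Fin (n + 1) → ℝ) (hw : w = (Real.sqrt (v ⬝ᵥ v))⁻¹ • v)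
    (A : Matrix (Fin (n + 1)) (Fin p) ℝ)
    (hA : A = ((1 : Matrix (Fin (n + 1)) (Fin (n + 1)) ℝ) - ((n : ℝ) + 1)⁻¹ • Matrix.vecMulVec (fun _ => 1) (fun _ => 1)) * V)
    (B : Matrix (Fin (n + 1)) (Fin p) ℝ)
    (hB : B = ((1 : Matrix (Fin (n + 1)) (Fin (n + 1)) ℝ) - Matrix.vecMulVec w w) * A) :
    (∀ (i : Fin n) (j : Fin p),
        B i.castSucc j = V i.castSucc j - (n : ℝ)⁻¹ * ∑ l : Fin n, V l.castSucc j)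
      ∧ (∀ j : Fin p, B (Fin.last n) j = 0) := by
  have hn0 : (n:ℝ) ≠ 0 := Nat.cast_ne_zero.mpr hn.ne'
  have hn1 : (n:ℝ)+1 ≠ 0 := by positivity
  have hne : ∀ i : Fin n, i.castSucc ≠ Fin.last n := fun i => (Fin.castSucc_lt_last i).ne
  have hvv : v ⬝ᵥ v = (n:ℝ) / ((n:ℝ)+1) := by
    subst hv
    simp only [dotProduct]
    rw [Fin.sum_univ_castSucc]
    simp [hne]
    field_simp
    ring
  set t := Real.sqrt (v ⬝ᵥ v) with htdef
  have ht2 : t * t = (n:ℝ)/((n:ℝ)+1) := by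
    rw [htdef, Real.mul_self_sqrt (by rw [hvv]; positivity)]
    exact hvv
  have ht0 : t ≠ 0 := by
    intro h
    rw [h, mul_zero] at ht2
    have : (n:ℝ)/((n:ℝ)+1) ≠ 0 := by positivity
    exact this ht2.symm
  have hti : t⁻¹ * t⁻¹ = ((n:ℝ)+1)/(n:ℝ) := by
    rw [← mul_inv, ht2, inv_div]
  have hS : ∀ j, ∑ l, V l j = (∑ l : Fin n, V l.castSucc j) + V (Fin.last n) j :=
    fun j => Fin.sum_univ_castSucc _
  have hAe : ∀ i j, A i j = V i j - ((n:ℝ)+1)⁻¹ * ∑ l, V l j := by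
    intro i j
    rw [hA]
    simp [Matrix.sub_mul, Matrix.mul_apply, Matrix.one_apply, Matrix.vecMulVec_apply,
      sub_mul, Finset.sum_sub_distrib, Finset.sum_ite_eq, Finset.mul_sum]
  have hBe : ∀ i j, B i j = A i j - w i * ∑ k, w k * A k j := by
    intro i j
    rw [hB]
    simp [Matrix.sub_mul, Matrix.mul_apply, Matrix.one_apply, Matrix.vecMulVec_apply,
      sub_mul, Finset.sum_sub_distrib, Finset.sum_ite_eq, Finset.mul_sum, mul_assoc]
  have hdot : ∀ j, ∑ k, w k * A k j
      = t⁻¹ * (V (Fin.last n) j - ((n:ℝ)+1)⁻¹ * ∑ l, V l j) := by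
    intro j
    have hvA : ∑ k, v k * A k j = V (Fin.last n) j - ((n:ℝ)+1)⁻¹ * ∑ l, V l j := by
      have : ∀ k, v k * A k j
          = (if k = Fin.last n then V k j else 0)
            - (if k = Fin.last n then (((n:ℝ)+1)⁻¹ * ∑ l, V l j) else 0)
            - ((n:ℝ)+1)⁻¹ * V k j
            + ((n:ℝ)+1)⁻¹ * (((n:ℝ)+1)⁻¹ * ∑ l, V l j) := by
        intro k
        rw [hAe, hv]
        by_cases h : k = Fin.last n <;> simp [h] <;> ring
      rw [Finset.sum_congr rfl (fun k _ => this k)]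
      simp only [Finset.sum_add_distrib, Finset.sum_sub_distrib, Finset.sum_ite_eq',
        Finset.mem_univ, if_pos, Finset.sum_const, Finset.card_univ, Fintype.card_fin,
        nsmul_eq_mul, ← Finset.mul_sum]
      push_cast
      field_simp
      ring
    rw [hw]
    simp only [Pi.smul_apply, smul_eq_mul]
    rw [← hvA, Finset.mul_sum]
    exact Finset.sum_congr rfl (fun k _ => by ring)
  constructor
  · intro i j
    rw [hBe, hAe, hdot, hw]
    simp only [Pi.smul_apply, smul_eq_mul, hv]
    rw [if_neg (hne i), hS j]
    have expand : (t⁻¹ * ((0:ℝ) - ((n:ℝ)+1)⁻¹)) * (t⁻¹ * (V (Fin.last n) j - ((n:ℝ)+1)⁻¹ * ((∑ l : Fin n, V l.castSucc j) + V (Fin.last n) j)))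
        = (t⁻¹ * t⁻¹) * (((0:ℝ) - ((n:ℝ)+1)⁻¹) * (V (Fin.last n) j - ((n:ℝ)+1)⁻¹ * ((∑ l : Fin n, V l.castSucc j) + V (Fin.last n) j))) := by ring
    rw [expand, hti]
    field_simp
    ring
  · intro j
    rw [hBe, hAe, hdot, hw]
    simp only [Pi.smul_apply, smul_eq_mul, hv]
    simp only [if_true]
    rw [hS j]
    have expand : (t⁻¹ * ((1:ℝ) - ((n:ℝ)+1)⁻¹)) * (t⁻¹ * (V (Fin.last n) j - ((n:ℝ)+1)⁻¹ * ((∑ l : Fin n, V l.castSucc j) + V (Fin.last n) j)))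
        = (t⁻¹ * t⁻¹) * (((1:ℝ) - ((n:ℝ)+1)⁻¹) * (V (Fin.last n) j - ((n:ℝ)+1)⁻¹ * ((∑ l : Fin n, V l.castSucc j) + V (Fin.last n) j))) := by ring
    rw [expand, hti]
    field_simp
    ring
end

section
/- Let T be a random vector in ℝˡ whose law has density f(x) = g(‖x‖²) with g : ℝ₊ → ℝ₊ nonincreasing. Let t > 0, s ∈ ℝˡ, and δ ∈ ℝ₊ˡ with ∏ᵢ δᵢ = 1. Then ℙ(∑ᵢ δᵢ(Tᵢ + sᵢ)² ≤ t) ≤ ℙ(∑ᵢ Tᵢ² ≤ t); i.e. the centered ball of radius √t maximizes the probability among all ellipsoids of the same Lebesgue volume. -/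
open MeasureTheory
open ENNReal

/-- Anderson-type inequality: if `T` has a spherical density `g(‖x‖²)` with `g`
nonincreasing, then among ellipsoids of the same volume as the centered ball of
radius `√t`, the ball maximizes the probability:
`ℙ(∑ᵢ δᵢ(Tᵢ+sᵢ)² ≤ t) ≤ ℙ(∑ᵢ Tᵢ² ≤ t)` whenever `∏ᵢ δᵢ = 1`. -/
theorem spherical_ball_maximizes_probability {l : ℕ}
    {Ω : Type*} [MeasurableSpace Ω] (μ : Measure Ω) [IsProbabilityMeasure μ]
    (T : Ω → EuclideanSpace ℝ (Fin l)) (hT : Measurable T)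
    (g : ℝ → ℝ) (hg_nonneg : ∀ x, 0 ≤ g x)
    (hg_mono : ∀ x y, 0 ≤ x → x ≤ y → g y ≤ g x)
    (hlaw : μ.map T =
      (volume : Measure (EuclideanSpace ℝ (Fin l))).withDensity
        (fun x => ENNReal.ofReal (g (‖x‖ ^ 2))))
    (t : ℝ) (ht : 0 < t)
    (s : Fin l → ℝ) (δ : Fin l → ℝ) (hδ : ∀ i, 0 < δ i) (hprod : ∏ i, δ i = 1) :
    μ {ω | ∑ i, δ i * (T ω i + s i) ^ 2 ≤ t} ≤ μ {ω | ∑ i, (T ω i) ^ 2 ≤ t} := by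
  set f : EuclideanSpace ℝ (Fin l) → ℝ≥0∞ := fun x => ENNReal.ofReal (g (‖x‖ ^ 2)) with hf
  -- square roots of δ
  set d : Fin l → ℝ := fun i => Real.sqrt (δ i) with hd
  have hd_pos : ∀ i, 0 < d i := fun i => Real.sqrt_pos.2 (hδ i)
  have hd_sq : ∀ i, d i ^ 2 = δ i := fun i => Real.sq_sqrt (hδ i).le
  have hd_prod : ∏ i, d i = 1 := by
    have h2 : (∏ i, d i) ^ 2 = 1 := by
      rw [← Finset.prod_pow]
      simp only [hd_sq]
      exact hprod
    have hpos : 0 < ∏ i, d i := Finset.prod_pos fun i _ => hd_pos i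
    nlinarith
  -- the two sets
  set A : Set (EuclideanSpace ℝ (Fin l)) := {x | ∑ i, δ i * (x i + s i) ^ 2 ≤ t} with hA
  set B : Set (EuclideanSpace ℝ (Fin l)) := {x | ∑ i, (x i) ^ 2 ≤ t} with hB
  have hA_meas : MeasurableSet A := by
    apply measurableSet_le _ measurable_const
    fun_prop
  have hB_meas : MeasurableSet B := by
    apply measurableSet_le _ measurable_const
    fun_prop
  have hnorm : ∀ x : EuclideanSpace ℝ (Fin l), ‖x‖ ^ 2 = ∑ i, x i ^ 2 := by
    intro x
    rw [EuclideanSpace.norm_eq, Real.sq_sqrt (by positivity)]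
    simp [sq_abs]
  -- volume of A equals volume of B
  have hM_apply : ∀ (x : EuclideanSpace ℝ (Fin l)) (i : Fin l),
      (Matrix.toEuclideanLin (Matrix.diagonal d)) x i = d i * x i := by
    intro x i
    change (Matrix.mulVec (Matrix.diagonal d) x.ofLp) i = _
    simp [Matrix.mulVec_diagonal]
  have hM_det : LinearMap.det (Matrix.toEuclideanLin (Matrix.diagonal d)) = 1 := by
    rw [Matrix.toEuclideanLin_eq_toLin_orthonormal, LinearMap.det_toLin, Matrix.det_diagonal, hd_prod]
  set sv : EuclideanSpace ℝ (Fin l) := (EuclideanSpace.equiv (Fin l) ℝ).symm s with hsv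
  have hsv_apply : ∀ i, sv i = s i := fun i => rfl
  have hAeq : A = (fun x => sv + x) ⁻¹' ((Matrix.toEuclideanLin (Matrix.diagonal d)) ⁻¹' B) := by
    ext x
    simp only [hA, hB, Set.mem_setOf_eq, Set.mem_preimage]
    have : ∀ i, ((Matrix.toEuclideanLin (Matrix.diagonal d)) (sv + x)) i ^ 2 = δ i * (x i + s i) ^ 2 := by
      intro i
      rw [hM_apply]
      have : (sv + x) i = s i + x i := rfl
      rw [this, mul_pow, hd_sq]
      ring
    rw [Finset.sum_congr rfl fun i _ => (this i).symm]
  have hdet_ne : LinearMap.det (Matrix.toEuclideanLin (Matrix.diagonal d)) ≠ 0 := by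
    rw [hM_det]; norm_num
  have hvol : volume A = volume B := by
    have h1 := Measure.addHaar_preimage_linearMap
      (volume : Measure (EuclideanSpace ℝ (Fin l))) hdet_ne B
    rw [hAeq, measure_preimage_add]
    exact h1.trans (show ENNReal.ofReal |(LinearMap.det (Matrix.toEuclideanLin (Matrix.diagonal d)))⁻¹| * volume B = volume B by
        rw [hM_det]; norm_num)
  have hB_fin : volume B ≠ ⊤ := by
    have hsub : B ⊆ Metric.closedBall (0 : EuclideanSpace ℝ (Fin l)) (Real.sqrt t) := by
      intro x hx
      simp only [Metric.mem_closedBall, dist_zero_right]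
      have h1 : ‖x‖ ^ 2 ≤ t := by rw [hnorm]; exact hx
      calc ‖x‖ = Real.sqrt (‖x‖ ^ 2) := by rw [Real.sqrt_sq (norm_nonneg x)]
        _ ≤ Real.sqrt t := Real.sqrt_le_sqrt h1
    exact ((measure_mono hsub).trans_lt (measure_closedBall_lt_top)).ne
  have hA_fin : volume A ≠ ⊤ := by rw [hvol]; exact hB_fin
  -- symmetric difference parts have equal volume
  have hdiff : volume (A \ B) = volume (B \ A) := by
    have h1 : volume (A ∩ B) + volume (A \ B) = volume A := measure_inter_add_diff A hB_meas
    have h2 : volume (B ∩ A) + volume (B \ A) = volume B := measure_inter_add_diff B hA_meas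
    have hint : volume (A ∩ B) ≠ ⊤ :=
      ((measure_mono Set.inter_subset_left).trans_lt hA_fin.lt_top).ne
    have : volume (A ∩ B) + volume (A \ B) = volume (A ∩ B) + volume (B \ A) := by
      rw [h1, hvol, ← h2, Set.inter_comm]
    exact (ENNReal.add_right_inj hint).1 this
  -- rewrite the goal as lintegrals
  have hAset : {ω | ∑ i, δ i * (T ω i + s i) ^ 2 ≤ t} = T ⁻¹' A := rfl
  have hBset : {ω | ∑ i, (T ω i) ^ 2 ≤ t} = T ⁻¹' B := rfl
  rw [hAset, hBset, ← Measure.map_apply hT hA_meas, ← Measure.map_apply hT hB_meas, hlaw,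
    withDensity_apply _ hA_meas, withDensity_apply _ hB_meas]
  -- pointwise bounds on the density on the symmetric difference
  have hub : ∫⁻ x in A \ B, f x ≤ ENNReal.ofReal (g t) * volume (A \ B) := by
    calc ∫⁻ x in A \ B, f x ≤ ∫⁻ _ in A \ B, ENNReal.ofReal (g t) := by
          apply setLIntegral_mono measurable_const
          intro x hx
          apply ENNReal.ofReal_le_ofReal
          apply hg_mono t (‖x‖ ^ 2) ht.le
          have : ¬ (∑ i, (x i) ^ 2 ≤ t) := hx.2
          rw [hnorm]
          linarith [not_le.1 this]
      _ = ENNReal.ofReal (g t) * volume (A \ B) := by rw [setLIntegral_const]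
  have hlb : ENNReal.ofReal (g t) * volume (B \ A) ≤ ∫⁻ x in B \ A, f x := by
    calc ENNReal.ofReal (g t) * volume (B \ A)
        = ∫⁻ _ in B \ A, ENNReal.ofReal (g t) := by rw [setLIntegral_const]
      _ ≤ ∫⁻ x in B \ A, f x := by
          apply setLIntegral_mono' (hB_meas.diff hA_meas)
          intro x hx
          apply ENNReal.ofReal_le_ofReal
          apply hg_mono (‖x‖ ^ 2) t (by positivity)
          rw [hnorm]
          exact hx.1
  -- combine
  have hAint : ∫⁻ x in A, f x = (∫⁻ x in A ∩ B, f x) + ∫⁻ x in A \ B, f x := by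
    rw [← lintegral_union (hA_meas.diff hB_meas)
      (Set.disjoint_left.2 fun x hx hx2 => hx2.2 hx.2), Set.inter_union_diff]
  have hBint : ∫⁻ x in B, f x = (∫⁻ x in A ∩ B, f x) + ∫⁻ x in B \ A, f x := by
    rw [← lintegral_union (hB_meas.diff hA_meas)
      (Set.disjoint_left.2 fun x hx hx2 => hx2.2 hx.1), Set.inter_comm A B,
      Set.inter_union_diff]
  rw [hAint, hBint]
  apply add_le_add_right
  calc ∫⁻ x in A \ B, f x ≤ ENNReal.ofReal (g t) * volume (A \ B) := hub
    _ = ENNReal.ofReal (g t) * volume (B \ A) := by rw [hdiff]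
    _ ≤ ∫⁻ x in B \ A, f x := hlb
end

section
/- Let Σ be a symmetric positive semidefinite (k+ℓ)×(k+ℓ) real matrix with blocks Σ^{11} ∈ M_{k,k}, Σ^{12}, Σ^{21}, Σ^{22} ∈ M_{ℓ,ℓ}. For λ ≥ 0 write Σ_λ = Σ + λI; denote its blocks Σ_λ^{11} = Σ^{11} + λI_k etc. Then the map λ ↦ det(Σ_λ)/det(Σ_λ^{11}) is nondecreasing on (0,∞), and strictly increasing. Equivalently, det(Σ_λ/Σ_λ^{11}) is strictly increasing in λ. -/
open Matrix

section Aux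

variable {n : Type*} [Fintype n] [DecidableEq n]

lemma smul_one_posDef {c : ℝ} (hc : 0 < c) : (c • (1 : Matrix n n ℝ)).PosDef := by
  rw [smul_one_eq_diagonal]
  exact (posDef_diagonal_iff).mpr fun _ => hc

lemma posDef_conj {A N : Matrix n n ℝ} (hA : A.PosDef) (hN : IsUnit N.det) :
    (Nᴴ * A * N).PosDef := by
  refine PosDef.of_dotProduct_mulVec_pos (isHermitian_conjTranspose_mul_mul N hA.1) fun ⦃x⦄ hx => ?_
  have hx' : N *ᵥ x ≠ 0 := by
    intro h
    apply hx
    have : N⁻¹ *ᵥ (N *ᵥ x) = x := by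
      rw [mulVec_mulVec, nonsing_inv_mul N hN, one_mulVec]
    rw [h, mulVec_zero] at this
    exact this.symm
  have := hA.dotProduct_mulVec_pos hx'
  have he : star (N *ᵥ x) ⬝ᵥ A *ᵥ (N *ᵥ x) = star x ⬝ᵥ (Nᴴ * A * N) *ᵥ x := by
    rw [star_mulVec, mulVec_mulVec, ← dotProduct_mulVec, mulVec_mulVec, Matrix.mul_assoc]
  rwa [he] at this

lemma dotProduct_star_self_pos' {v : n → ℝ} (hv : v ≠ 0) : 0 < star v ⬝ᵥ v := by
  have := (Matrix.PosDef.one (n := n) (R := ℝ)).dotProduct_mulVec_pos hv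
  rwa [one_mulVec] at this

lemma psd_smul {A : Matrix n n ℝ} (hA : A.PosSemidef) {c : ℝ} (hc : 0 ≤ c) :
    (c • A).PosSemidef := by
  refine PosSemidef.of_dotProduct_mulVec_nonneg ?_ fun x => ?_
  · rw [IsHermitian, conjTranspose_smul, star_trivial, hA.1.eq]
  · rw [smul_mulVec, dotProduct_smul, smul_eq_mul]
    exact mul_nonneg hc (hA.dotProduct_mulVec_nonneg x)

lemma det_lt_det_of_posSemidef_of_posDef_sub [Nonempty n]
    {A B : Matrix n n ℝ} (hA : A.PosSemidef) (hBA : (B - A).PosDef) : A.det < B.det := by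
  have hB : B.PosDef := by
    have := hBA.add_posSemidef hA
    rwa [sub_add_cancel] at this
  open scoped MatrixOrder in
  set R := CFC.sqrt B with hRdef
  open scoped MatrixOrder in
  have hR : R.PosSemidef := (CFC.sqrt_nonneg B).posSemidef
  open scoped MatrixOrder in
  have hRR : R * R = B := CFC.sqrt_mul_sqrt_self B hB.posSemidef.nonneg
  have hdetB : 0 < B.det := hB.det_pos
  have hdetB' : R.det * R.det = B.det := by rw [← det_mul, hRR]
  have hdetR : IsUnit R.det := by
    rw [isUnit_iff_ne_zero]
    intro h
    rw [h, mul_zero] at hdetB'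
    exact absurd hdetB'.symm (ne_of_gt hdetB)
  have hRinv : R * R⁻¹ = 1 := mul_nonsing_inv R hdetR
  have hRinv' : R⁻¹ * R = 1 := nonsing_inv_mul R hdetR
  have hRinvH : R⁻¹ᴴ = R⁻¹ := by rw [conjTranspose_nonsing_inv, hR.1.eq]
  set C := R⁻¹ * A * R⁻¹ with hCdef
  have hC : C.PosSemidef := by
    have := hA.conjTranspose_mul_mul_same R⁻¹
    rwa [hRinvH] at this
  have h1C : (1 - C).PosDef := by
    have hform : (1 : Matrix n n ℝ) - C = R⁻¹ᴴ * (B - A) * R⁻¹ := by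
      rw [hRinvH, Matrix.mul_sub, Matrix.sub_mul, hCdef]
      congr 1
      rw [← hRR, ← Matrix.mul_assoc, Matrix.mul_assoc (R⁻¹ * R), hRinv', hRinv,
        Matrix.one_mul]
    rw [hform]
    apply posDef_conj hBA
    have : R⁻¹.det * R.det = 1 := by rw [← det_mul, hRinv', det_one]
    exact IsUnit.of_mul_eq_one _ this
  have hCdet : C.det < 1 := by
    have hdet : C.det = ∏ i, hC.1.eigenvalues i := by
      simpa using hC.1.det_eq_prod_eigenvalues
    have hlt : ∀ i, hC.1.eigenvalues i < 1 := by
      intro i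
      set v := ⇑(hC.1.eigenvectorBasis i) with hv
      have hv0 : v ≠ 0 := by
        intro h
        exact hC.1.eigenvectorBasis.orthonormal.ne_zero i (by ext j; exact congrFun h j)
      have hCv : C *ᵥ v = hC.1.eigenvalues i • v := hC.1.mulVec_eigenvectorBasis i
      have hpos := h1C.dotProduct_mulVec_pos hv0
      rw [sub_mulVec, one_mulVec, hCv, dotProduct_sub] at hpos
      have hvv : 0 < star v ⬝ᵥ v := dotProduct_star_self_pos' hv0
      have hsm : star v ⬝ᵥ (hC.1.eigenvalues i • v) = hC.1.eigenvalues i * (star v ⬝ᵥ v) := by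
        simp [dotProduct_smul, smul_eq_mul]
      rw [hsm] at hpos
      nlinarith
    rw [hdet]
    by_cases h0 : ∃ i, hC.1.eigenvalues i = 0
    · obtain ⟨i, hi⟩ := h0
      rw [Finset.prod_eq_zero (Finset.mem_univ i) hi]
      norm_num
    · push_neg at h0
      have := Finset.prod_lt_prod_of_nonempty
        (f := fun i => hC.1.eigenvalues i) (g := fun _ => (1 : ℝ))
        (fun i _ => lt_of_le_of_ne (hC.eigenvalues_nonneg i) (Ne.symm (h0 i)))
        (fun i _ => hlt i) Finset.univ_nonempty
      simpa using this
  have hAeq : A = R * C * R := by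
    rw [hCdef, ← Matrix.mul_assoc, ← Matrix.mul_assoc, hRinv, Matrix.one_mul,
      Matrix.mul_assoc, hRinv', Matrix.mul_one]
  have : A.det = C.det * B.det := by
    rw [hAeq, det_mul, det_mul, ← hdetB']; ring
  rw [this]
  calc C.det * B.det < 1 * B.det := by
        exact mul_lt_mul_of_pos_right hCdet hdetB
    _ = B.det := one_mul _

end Aux

/-- The ratio `det(Σ + λI)/det(Σ¹¹ + λI)` (i.e. the determinant of the Schur
complement of the regularized matrix) is strictly increasing in `λ` on `(0,∞)`. -/
theorem schur_det_ratio_strict_mono {k l : Type*} [Fintype k] [Fintype l]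
    [DecidableEq k] [DecidableEq l] [Nonempty l]
    (S : Matrix (k ⊕ l) (k ⊕ l) ℝ) (hS : S.PosSemidef) :
    StrictMonoOn
      (fun lam : ℝ =>
        (S + lam • (1 : Matrix (k ⊕ l) (k ⊕ l) ℝ)).det /
          (S.toBlocks₁₁ + lam • (1 : Matrix k k ℝ)).det)
      (Set.Ioi (0 : ℝ)) := by
  intro a ha b hb hab
  simp only [Set.mem_Ioi] at ha hb
  set B := S.toBlocks₁₂ with hBdef
  have hB21 : S.toBlocks₂₁ = Bᴴ := by
    ext i j
    have := congrFun (congrFun hS.1 (Sum.inr i)) (Sum.inl j)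
    simp only [conjTranspose_apply, star_trivial] at this
    simpa [hBdef, toBlocks₂₁, toBlocks₁₂, conjTranspose_apply] using this.symm
  have hdecomp : ∀ lam : ℝ, S + lam • (1 : Matrix (k ⊕ l) (k ⊕ l) ℝ) =
      fromBlocks (S.toBlocks₁₁ + lam • 1) B Bᴴ (S.toBlocks₂₂ + lam • 1) := by
    intro lam
    conv_lhs => rw [← fromBlocks_toBlocks S, ← fromBlocks_one (l := k) (m := l)]
    rw [fromBlocks_smul, fromBlocks_add, hB21]
    simp [hBdef]
  -- positive definiteness of the regularized 11-block
  have h11psd : S.toBlocks₁₁.PosSemidef := hS.submatrix Sum.inl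
  have hA : ∀ lam : ℝ, 0 < lam → (S.toBlocks₁₁ + lam • (1 : Matrix k k ℝ)).PosDef :=
    fun lam hlam => Matrix.PosDef.posSemidef_add h11psd (smul_one_posDef hlam)
  have hAa := hA a ha
  have hAb := hA b hb
  set Aa := S.toBlocks₁₁ + a • (1 : Matrix k k ℝ) with hAadef
  set Ab := S.toBlocks₁₁ + b • (1 : Matrix k k ℝ) with hAbdef
  have hAainv : Aa * Aa⁻¹ = 1 := mul_nonsing_inv _ hAa.det_pos.ne'.isUnit
  have hAainv' : Aa⁻¹ * Aa = 1 := nonsing_inv_mul _ hAa.det_pos.ne'.isUnit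
  have hAbinv : Ab * Ab⁻¹ = 1 := mul_nonsing_inv _ hAb.det_pos.ne'.isUnit
  have hAbinv' : Ab⁻¹ * Ab = 1 := nonsing_inv_mul _ hAb.det_pos.ne'.isUnit
  -- the ratio equals the determinant of the Schur complement
  have hratio : ∀ lam : ℝ, 0 < lam →
      (S + lam • (1 : Matrix (k ⊕ l) (k ⊕ l) ℝ)).det /
        (S.toBlocks₁₁ + lam • (1 : Matrix k k ℝ)).det =
      (S.toBlocks₂₂ + lam • 1 - Bᴴ * (S.toBlocks₁₁ + lam • 1)⁻¹ * B).det := by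
    intro lam hlam
    letI hinv : Invertible (S.toBlocks₁₁ + lam • (1 : Matrix k k ℝ)) :=
      (S.toBlocks₁₁ + lam • (1 : Matrix k k ℝ)).invertibleOfIsUnitDet
        (hA lam hlam).det_pos.ne'.isUnit
    rw [hdecomp lam, det_fromBlocks₁₁]
    exact mul_div_cancel_left₀ _ (hA lam hlam).det_pos.ne'
  -- Schur complements
  set Ma := S.toBlocks₂₂ + a • (1 : Matrix l l ℝ) - Bᴴ * Aa⁻¹ * B with hMadef
  set Mb := S.toBlocks₂₂ + b • (1 : Matrix l l ℝ) - Bᴴ * Ab⁻¹ * B with hMbdef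
  -- Ma is PSD
  have hMa : Ma.PosSemidef := by
    letI hinv : Invertible Aa :=
      Aa.invertibleOfIsUnitDet hAa.det_pos.ne'.isUnit
    have hSa : (fromBlocks Aa B Bᴴ (S.toBlocks₂₂ + a • 1)).PosSemidef := by
      rw [← hdecomp a]
      exact hS.add (smul_one_posDef ha).posSemidef
    exact (PosDef.fromBlocks₁₁ B _ hAa).mp hSa
  -- Mb - Ma is PD
  have hdiff : (Mb - Ma).PosDef := by
    have hc : 0 < b - a := sub_pos.mpr hab
    have hinves : Aa⁻¹ - Ab⁻¹ =
        (b - a) • (Ab⁻¹ * Ab⁻¹) + (b - a) ^ 2 • (Ab⁻¹ * Aa⁻¹ * Ab⁻¹) := by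
      have h1 : Aa⁻¹ - Ab⁻¹ = Ab⁻¹ * (Ab * Aa⁻¹ - 1) := by
        rw [Matrix.mul_sub, ← Matrix.mul_assoc, hAbinv', Matrix.one_mul, Matrix.mul_one]
      have h2 : Ab * Aa⁻¹ - 1 = (b - a) • Aa⁻¹ := by
        have : Ab = Aa + (b - a) • (1 : Matrix k k ℝ) := by
          rw [hAadef, hAbdef]
          rw [add_assoc, ← add_smul]
          ring_nf
        rw [this, Matrix.add_mul, hAainv, Matrix.smul_mul, Matrix.one_mul]
        abel
      have h3 : Aa⁻¹ = (b - a) • (Aa⁻¹ * Ab⁻¹) + Ab⁻¹ := by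
        have : Aa⁻¹ * (Ab * Ab⁻¹) = Aa⁻¹ := by rw [hAbinv, Matrix.mul_one]
        calc Aa⁻¹ = Aa⁻¹ * (Ab * Ab⁻¹) := this.symm
          _ = (Aa⁻¹ * Ab) * Ab⁻¹ := by rw [Matrix.mul_assoc]
          _ = (b - a) • (Aa⁻¹ * Ab⁻¹) + Ab⁻¹ := by
              have hAbe : Ab = Aa + (b - a) • (1 : Matrix k k ℝ) := by
                rw [hAadef, hAbdef, add_assoc, ← add_smul]; ring_nf
              rw [hAbe, Matrix.mul_add, Matrix.add_mul, hAainv', Matrix.one_mul,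
                Matrix.mul_smul, Matrix.smul_mul, Matrix.mul_one]
              abel
      calc Aa⁻¹ - Ab⁻¹ = Ab⁻¹ * ((b - a) • Aa⁻¹) := by rw [h1, h2]
        _ = (b - a) • (Ab⁻¹ * Aa⁻¹) := by rw [Matrix.mul_smul]
        _ = (b - a) • (Ab⁻¹ * ((b - a) • (Aa⁻¹ * Ab⁻¹) + Ab⁻¹)) := by rw [← h3]
        _ = (b - a) • (Ab⁻¹ * Ab⁻¹) + (b - a) ^ 2 • (Ab⁻¹ * Aa⁻¹ * Ab⁻¹) := by
            rw [Matrix.mul_add, Matrix.mul_smul, smul_add, smul_smul, ← Matrix.mul_assoc]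
            rw [add_comm]
            congr 1
            rw [pow_two]
    have hMbMa : Mb - Ma = (b - a) • (1 : Matrix l l ℝ) + Bᴴ * (Aa⁻¹ - Ab⁻¹) * B := by
      have hsub : Bᴴ * (Aa⁻¹ - Ab⁻¹) * B = Bᴴ * Aa⁻¹ * B - Bᴴ * Ab⁻¹ * B := by
        rw [Matrix.mul_sub, Matrix.sub_mul]
      rw [hMbdef, hMadef, hsub, sub_smul]
      abel
    have hAbiH : Ab⁻¹ᴴ = Ab⁻¹ := by rw [conjTranspose_nonsing_inv, hAb.1.eq]
    have hpsd : (Bᴴ * (Aa⁻¹ - Ab⁻¹) * B).PosSemidef := by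
      rw [hinves]
      have e1 : Bᴴ * ((b - a) • (Ab⁻¹ * Ab⁻¹) + (b - a) ^ 2 • (Ab⁻¹ * Aa⁻¹ * Ab⁻¹)) * B =
          (b - a) • ((Ab⁻¹ * B)ᴴ * (Ab⁻¹ * B)) +
          (b - a) ^ 2 • ((Ab⁻¹ * B)ᴴ * Aa⁻¹ * (Ab⁻¹ * B)) := by
        rw [conjTranspose_mul, hAbiH]
        rw [Matrix.mul_add, Matrix.add_mul]
        congr 1
        · rw [Matrix.mul_smul, Matrix.smul_mul]
          congr 1
          simp only [Matrix.mul_assoc]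
        · rw [Matrix.mul_smul, Matrix.smul_mul]
          congr 1
          simp only [Matrix.mul_assoc]
      rw [e1]
      apply PosSemidef.add
      · exact psd_smul (posSemidef_conjTranspose_mul_self _) hc.le
      · exact psd_smul ((hAa.posSemidef.inv).conjTranspose_mul_mul_same (Ab⁻¹ * B))
          (by positivity)
    rw [hMbMa]
    exact (smul_one_posDef hc).add_posSemidef hpsd
  have hfin := det_lt_det_of_posSemidef_of_posDef_sub hMa hdiff
  simp only [hratio a ha, hratio b hb]
  exact hfin
end

section
/- Let q > 0, k, ℓ ∈ ℕ positive, and S ~ χ²(k). Then for any t > 0, E[(t − S)₊^{qℓ/2}] = [Γ(qℓ/2 + 1) / (2^{k/2} Γ((k+qℓ)/2 + 1))] · t^{(k+qℓ)/2} · ₁F₁(k/2, (k+qℓ)/2 + 1, −t/2), where ₁F₁ is Kummer's confluent hypergeometric function and (x)₊ = max(x,0). -/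
open MeasureTheory ProbabilityTheory Real
open scoped ENNReal NNReal
open Set

/-- Kummer's confluent hypergeometric function `₁F₁(a, b, z) = ∑ₙ (a)ₙ/(b)ₙ · zⁿ/n!`,
where `(a)ₙ` denotes the ascending Pochhammer symbol. -/
noncomputable def oneF1 (a b z : ℝ) : ℝ :=
  ∑' n : ℕ, ((ascPochhammer ℝ n).eval a / (ascPochhammer ℝ n).eval b) * z ^ n / n.factorial


lemma aux_Gamma_add_nat (x : ℝ) (hx : 0 < x) (n : ℕ) :
    Real.Gamma (x + n) = Real.Gamma x * (ascPochhammer ℝ n).eval x := by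
  induction n with
  | zero => simp
  | succ n ih =>
    have hxn : (0:ℝ) < x + n := by positivity
    have : x + (n + 1 : ℕ) = (x + n) + 1 := by push_cast; ring
    rw [this, Real.Gamma_add_one hxn.ne', ih, ascPochhammer_succ_eval]
    ring

lemma aux_poch_pos (x : ℝ) (hx : 0 < x) (n : ℕ) : 0 < (ascPochhammer ℝ n).eval x := by
  induction n with
  | zero => simp
  | succ n ih =>
    rw [ascPochhammer_succ_eval]
    have : (0:ℝ) < x + n := by positivity
    positivity

lemma real_beta_scaled {u v c : ℝ} (hu : 0 < u) (hv : 0 < v) (hc : 0 < c) :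
    ∫ x in (0:ℝ)..c, x ^ (u - 1) * (c - x) ^ (v - 1) =
      c ^ (u + v - 1) * (Real.Gamma u * Real.Gamma v / Real.Gamma (u + v)) := by
  have h1 := Complex.betaIntegral_scaled u v hc
  have hG : Complex.Gamma ((u:ℂ) + v) ≠ 0 := by
    rw [← Complex.ofReal_add, Complex.Gamma_ofReal]
    exact_mod_cast (Real.Gamma_pos_of_pos (by positivity)).ne'
  have hβ : Complex.betaIntegral u v =
      ((Real.Gamma u * Real.Gamma v / Real.Gamma (u + v) : ℝ) : ℂ) := by
    have h2 := Complex.Gamma_mul_Gamma_eq_betaIntegral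
      (s := (u:ℂ)) (t := (v:ℂ)) (by simpa using hu) (by simpa using hv)
    rw [eq_comm, Complex.ofReal_div, Complex.ofReal_mul, ← Complex.Gamma_ofReal,
      ← Complex.Gamma_ofReal, ← Complex.Gamma_ofReal, Complex.ofReal_add,
      div_eq_iff hG, h2, mul_comm]
  have hL : (∫ x in (0:ℝ)..c, (x:ℂ) ^ ((u:ℂ) - 1) * ((c:ℂ) - x) ^ ((v:ℂ) - 1)) =
      ((∫ x in (0:ℝ)..c, x ^ (u - 1) * (c - x) ^ (v - 1) : ℝ) : ℂ) := by
    rw [← intervalIntegral.integral_ofReal]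
    rw [intervalIntegral.integral_of_le hc.le, intervalIntegral.integral_of_le hc.le]
    refine setIntegral_congr_fun measurableSet_Ioc fun x hx => ?_
    rw [Complex.ofReal_mul, Complex.ofReal_cpow hx.1.le,
      Complex.ofReal_cpow (by linarith [hx.2] : (0:ℝ) ≤ c - x)]
    push_cast
    ring
  have hR : ((c:ℂ)) ^ ((u:ℂ) + (v:ℂ) - 1) = ((c ^ (u + v - 1) : ℝ) : ℂ) := by
    rw [Complex.ofReal_cpow hc.le]
    push_cast
    ring_nf
  rw [hL, hβ, hR, ← Complex.ofReal_mul] at h1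
  exact_mod_cast h1

lemma beta_Ioc {u p c : ℝ} (hu : 0 < u) (hp : 0 < p) (hc : 0 < c) :
    ∫ x in Ioc (0:ℝ) c, x ^ (u - 1) * (c - x) ^ p =
      c ^ (u + p) * (Real.Gamma u * Real.Gamma (p + 1) / Real.Gamma (u + p + 1)) := by
  have h := real_beta_scaled hu (by linarith : (0:ℝ) < p + 1) hc
  rw [intervalIntegral.integral_of_le hc.le] at h
  simpa [add_sub_cancel_right, show u + (p+1) - 1 = u + p by ring,
    show u + (p+1) = u + p + 1 by ring] using h

/-- For `S ∼ χ²(k)` (i.e. `Gamma(k/2, rate 1/2)`), the moment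
`E[(t − S)₊^{qℓ/2}]` is given explicitly in terms of `₁F₁`. -/
theorem chi_square_truncated_moment
    (q : ℝ) (hq : 0 < q) (k l : ℕ) (hk : 0 < k) (hl : 0 < l)
    (t : ℝ) (ht : 0 < t) :
    ∫ s, (max (t - s) 0) ^ (q * l / 2)
        ∂(gammaMeasure ((k : ℝ) / 2) (1 / 2)) =
      (Real.Gamma (q * l / 2 + 1) /
          ((2 : ℝ) ^ ((k : ℝ) / 2) * Real.Gamma (((k : ℝ) + q * l) / 2 + 1))) *
        t ^ (((k : ℝ) + q * l) / 2) *
        oneF1 ((k : ℝ) / 2) (((k : ℝ) + q * l) / 2 + 1) (-t / 2) := by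
  have hexp : ∀ y : ℝ, Real.exp y = ∑' n : ℕ, y ^ n / n.factorial := fun y => by
    rw [Real.exp_eq_exp_ℝ, NormedSpace.exp_eq_tsum_div]
  have hk' : (0:ℝ) < k := Nat.cast_pos.mpr hk
  have hl' : (0:ℝ) < l := Nat.cast_pos.mpr hl
  rw [show ((k : ℝ) + q * l) / 2 = (k:ℝ)/2 + q * l / 2 by ring]
  set a : ℝ := (k:ℝ)/2 with ha_def
  set p : ℝ := q * l / 2 with hp_def
  have ha : 0 < a := by positivity
  have hp : 0 < p := by positivity
  have hΓa : 0 < Real.Gamma a := Real.Gamma_pos_of_pos ha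
  have hb : 0 < a + p + 1 := by positivity
  have hΓb : 0 < Real.Gamma (a + p + 1) := Real.Gamma_pos_of_pos hb
  set C : ℝ := (1/2 : ℝ) ^ a / Real.Gamma a with hC_def
  have hC : 0 < C := by
    apply div_pos (Real.rpow_pos_of_pos (by norm_num) _) hΓa
  set f : ℕ → ℝ → ℝ := fun n x =>
    ((-(1/2:ℝ))^n / n.factorial * C) * (x ^ (a + n - 1) * (t - x) ^ p) with hf_def
  -- step 1
  have step1 : ∫ s, (max (t - s) 0) ^ p ∂(gammaMeasure a (1/2)) =
      ∫ s, gammaPDFReal a (1/2) s * (max (t - s) 0) ^ p := by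
    have hmeq : gammaMeasure a (1/2) =
        volume.withDensity (fun x => ((gammaPDFReal a (1/2) x).toNNReal : ℝ≥0∞)) := rfl
    rw [hmeq, integral_withDensity_eq_integral_smul
      ((measurable_gammaPDFReal a (1/2)).real_toNNReal)]
    refine integral_congr_ae (Filter.Eventually.of_forall fun x => ?_)
    simp only [NNReal.smul_def, smul_eq_mul,
      Real.coe_toNNReal _ (gammaPDFReal_nonneg ha (by norm_num : (0:ℝ) < 1/2) x)]
  -- step 2
  have step2 : ∫ s in Ioc (0:ℝ) t, gammaPDFReal a (1/2) s * (max (t - s) 0) ^ p =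
      ∫ s, gammaPDFReal a (1/2) s * (max (t - s) 0) ^ p := by
    refine setIntegral_eq_integral_of_ae_compl_eq_zero ?_
    have h0 : ∀ᵐ x : ℝ, x ≠ (0:ℝ) := by
      refine ae_iff.mpr ?_
      simp
    filter_upwards [h0] with x hx0 hx
    rw [mem_Ioc, not_and_or] at hx
    rcases hx with hx | hx
    · push_neg at hx
      have : ¬ (0:ℝ) ≤ x := not_le.mpr (lt_of_le_of_ne hx hx0)
      simp [gammaPDFReal, this]
    · push_neg at hx
      rw [max_eq_right (by linarith), Real.zero_rpow hp.ne', mul_zero]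
  -- step 3
  have step3 : ∫ s in Ioc (0:ℝ) t, gammaPDFReal a (1/2) s * (max (t - s) 0) ^ p =
      ∫ s in Ioc (0:ℝ) t, ∑' n, f n s := by
    refine setIntegral_congr_fun measurableSet_Ioc fun x hx => ?_
    simp only [gammaPDFReal, if_pos hx.1.le, max_eq_left (by linarith [hx.2] : (0:ℝ) ≤ t - x),
      hexp (-(1/2 * x)), hf_def]
    rw [← tsum_mul_left, ← tsum_mul_right]
    refine tsum_congr fun n => ?_
    have hxpow : x ^ (a + (n:ℝ) - 1) = x ^ (a - 1) * x ^ (n:ℕ) := by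
      rw [← Real.rpow_natCast x n, ← Real.rpow_add hx.1]
      ring_nf
    rw [hxpow, show (-(1/2 * x) : ℝ) = (-(1/2:ℝ)) * x by ring, mul_pow, hC_def]
    field_simp
  -- integrability pieces
  have hIb : ∀ n : ℕ, IntegrableOn (fun x : ℝ => x ^ (a + (n:ℝ) - 1)) (Ioc 0 t) volume := by
    intro n
    have hn : (0:ℝ) ≤ n := Nat.cast_nonneg n
    exact (intervalIntegral.intervalIntegrable_rpow' (by linarith)).1
  have hmeas : ∀ n : ℕ, Measurable (fun x : ℝ => x ^ (a + (n:ℝ) - 1) * (t - x) ^ p) := by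
    intro n
    exact (measurable_id'.pow_const _).mul ((measurable_const.sub measurable_id').pow_const _)
  have hInt : ∀ n : ℕ, IntegrableOn (fun x : ℝ => x ^ (a + (n:ℝ) - 1) * (t - x) ^ p)
      (Ioc 0 t) volume := by
    intro n
    refine Integrable.mono' ((hIb n).mul_const (t ^ p)) (hmeas n).aestronglyMeasurable ?_
    filter_upwards [ae_restrict_mem measurableSet_Ioc] with x hx
    have h1 : (0:ℝ) ≤ x ^ (a + (n:ℝ) - 1) := Real.rpow_nonneg hx.1.le _
    have h2 : (0:ℝ) ≤ t - x := by linarith [hx.2]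
    rw [Real.norm_eq_abs, abs_of_nonneg (mul_nonneg h1 (Real.rpow_nonneg h2 _))]
    exact mul_le_mul_of_nonneg_left
      (Real.rpow_le_rpow h2 (by linarith [hx.1]) hp.le) h1
  have hF_int : ∀ n : ℕ, Integrable (f n) (volume.restrict (Ioc 0 t)) := fun n =>
    ((hInt n).const_mul _)
  -- value of pure power integral
  have hpow_int : ∀ n : ℕ, ∫ x in Ioc (0:ℝ) t, x ^ (a + (n:ℝ) - 1)
      = t ^ (a + (n:ℝ)) / (a + (n:ℝ)) := by
    intro n
    have hn : (0:ℝ) ≤ n := Nat.cast_nonneg n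
    rw [← intervalIntegral.integral_of_le ht.le, integral_rpow (Or.inl (by linarith)),
      show a + (n:ℝ) - 1 + 1 = a + n by ring, Real.zero_rpow (show a + (n:ℝ) ≠ 0 by positivity), sub_zero]
  -- summability of integral norms
  have hF_sum : Summable (fun n : ℕ => ∫ x in Ioc (0:ℝ) t, ‖f n x‖) := by
    have key : ∀ n : ℕ, ∫ x in Ioc (0:ℝ) t, ‖f n x‖ ≤
        (C * t ^ p * t ^ a / a) * ((t/2) ^ n / n.factorial) := by
      intro n
      have hcn : ‖(-(1/2:ℝ))^n / n.factorial * C‖ = (1/2:ℝ)^n / n.factorial * C := by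
        rw [Real.norm_eq_abs, abs_mul, abs_div, abs_pow, abs_neg,
          abs_of_nonneg (by norm_num : (0:ℝ) ≤ (1/2:ℝ)),
          abs_of_nonneg (by positivity : (0:ℝ) ≤ (n.factorial : ℝ)), abs_of_nonneg hC.le]
      have e1 : ∫ x in Ioc (0:ℝ) t, ‖f n x‖ =
          ((1/2:ℝ)^n / n.factorial * C) * ∫ x in Ioc (0:ℝ) t, x ^ (a + (n:ℝ) - 1) * (t - x) ^ p := by
        rw [← integral_const_mul]
        refine setIntegral_congr_fun measurableSet_Ioc fun x hx => ?_
        have h1 : (0:ℝ) ≤ x ^ (a + (n:ℝ) - 1) := Real.rpow_nonneg hx.1.le _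
        have h2 : (0:ℝ) ≤ t - x := by linarith [hx.2]
        rw [hf_def]
        rw [norm_mul, hcn, Real.norm_eq_abs,
          abs_of_nonneg (mul_nonneg h1 (Real.rpow_nonneg h2 _))]
      rw [e1]
      have hptw : ∀ x ∈ Ioc (0:ℝ) t, x ^ (a + (n:ℝ) - 1) * (t - x) ^ p ≤
          x ^ (a + (n:ℝ) - 1) * t ^ p := by
        intro x hx
        have h1 : (0:ℝ) ≤ x ^ (a + (n:ℝ) - 1) := Real.rpow_nonneg hx.1.le _
        have h2 : (0:ℝ) ≤ t - x := by linarith [hx.2]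
        exact mul_le_mul_of_nonneg_left
          (Real.rpow_le_rpow h2 (by linarith [hx.1]) hp.le) h1
      have e2 : ∫ x in Ioc (0:ℝ) t, x ^ (a + (n:ℝ) - 1) * (t - x) ^ p ≤
          t ^ p * (t ^ (a + (n:ℝ)) / (a + (n:ℝ))) := by
        calc ∫ x in Ioc (0:ℝ) t, x ^ (a + (n:ℝ) - 1) * (t - x) ^ p
            ≤ ∫ x in Ioc (0:ℝ) t, x ^ (a + (n:ℝ) - 1) * t ^ p :=
              setIntegral_mono_on (hInt n) ((hIb n).mul_const (t ^ p))
                measurableSet_Ioc hptw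
          _ = t ^ p * (t ^ (a + (n:ℝ)) / (a + (n:ℝ))) := by
              rw [integral_mul_const, hpow_int n]
              ring
      calc ((1/2:ℝ)^n / n.factorial * C) *
            ∫ x in Ioc (0:ℝ) t, x ^ (a + (n:ℝ) - 1) * (t - x) ^ p
          ≤ ((1/2:ℝ)^n / n.factorial * C) * (t ^ p * (t ^ (a + (n:ℝ)) / (a + (n:ℝ)))) := by
            refine mul_le_mul_of_nonneg_left e2 (by positivity)
        _ = (C * t ^ p * t ^ a / (a + (n:ℝ))) * ((t/2) ^ n / n.factorial) := by
            have ht1 : t ^ (a + (n:ℝ)) = t ^ a * t ^ (n:ℕ) := by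
              rw [Real.rpow_add ht, Real.rpow_natCast]
            have hn : (0:ℝ) < a + (n:ℝ) := by
              have := Nat.cast_nonneg (α := ℝ) n; linarith
            rw [ht1, div_pow, one_pow]
            field_simp
            ring
            rw [mul_assoc, ← mul_pow]
            norm_num
        _ ≤ (C * t ^ p * t ^ a / a) * ((t/2) ^ n / n.factorial) := by
            have hn : (0:ℝ) ≤ n := Nat.cast_nonneg n
            have hd : C * t ^ p * t ^ a / (a + (n:ℝ)) ≤ C * t ^ p * t ^ a / a :=
              div_le_div_of_nonneg_left (by positivity) ha (by linarith)
            exact mul_le_mul_of_nonneg_right hd (by positivity)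
    refine Summable.of_nonneg_of_le
      (fun n => integral_nonneg fun x => norm_nonneg _) key ?_
    exact (Real.summable_pow_div_factorial (t/2)).mul_left _
  -- interchange
  have step4 : ∫ s in Ioc (0:ℝ) t, ∑' n, f n s = ∑' n, ∫ s in Ioc (0:ℝ) t, f n s :=
    (integral_tsum_of_summable_integral_norm hF_int hF_sum).symm
  -- term values
  have hterm : ∀ n : ℕ, ∫ s in Ioc (0:ℝ) t, f n s =
      ((-(1/2:ℝ))^n / n.factorial * C) * (t ^ (a + (n:ℝ) + p) *
        (Real.Gamma (a + n) * Real.Gamma (p + 1) / Real.Gamma (a + (n:ℝ) + p + 1))) := by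
    intro n
    have hn : (0:ℝ) ≤ n := Nat.cast_nonneg n
    rw [hf_def, integral_const_mul, beta_Ioc (by linarith : (0:ℝ) < a + (n:ℝ)) hp ht]
  rw [step1, ← step2, step3, step4]
  rw [oneF1, ← tsum_mul_left]
  refine tsum_congr fun n => ?_
  rw [hterm n]
  have hGa : Real.Gamma (a + n) = Real.Gamma a * (ascPochhammer ℝ n).eval a :=
    aux_Gamma_add_nat a ha n
  have hGb : Real.Gamma (a + (n:ℝ) + p + 1) =
      Real.Gamma (a + p + 1) * (ascPochhammer ℝ n).eval (a + p + 1) := by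
    rw [show a + (n:ℝ) + p + 1 = (a + p + 1) + n by ring]
    exact aux_Gamma_add_nat _ hb n
  have htp : t ^ (a + (n:ℝ) + p) = t ^ (a + p) * t ^ (n:ℕ) := by
    rw [show a + (n:ℝ) + p = (a + p) + n by ring, Real.rpow_add ht, Real.rpow_natCast]
  have h2a : (1/2:ℝ) ^ a = ((2:ℝ) ^ a)⁻¹ := by
    rw [one_div, ← Real.inv_rpow (by norm_num : (0:ℝ) ≤ 2)]
  have hpb : (0:ℝ) < (ascPochhammer ℝ n).eval (a + p + 1) := aux_poch_pos _ hb n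
  have hfac : (0:ℝ) < (n.factorial : ℝ) := by positivity
  have h2ap : (0:ℝ) < (2:ℝ) ^ a := Real.rpow_pos_of_pos (by norm_num) a
  rw [hGa, hGb, htp, hC_def, h2a, show (-t/2 : ℝ) = (-(1/2:ℝ)) * t by ring, mul_pow]
  field_simp
end
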